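/- Let e_m, e_n be orthogonal real unit pure quaternions, φ a real number, and u = 1 + (e_m + i e_n) φ/2 (= exp[(e_m + i e_n)φ/2]). Then the minquat x = e0 + i e_m e_n satisfies u x (ū)* = x; i.e. x is an eigenminquat of the singular proper Lorentz rotation with eigenvalue 1. -/

import Mathlib

open scoped Quaternion

/-- Componentwise complex conjugation of a complex quaternion. -/
noncomputable def cconj (q : ℍ[ℂ]) : ℍ[ℂ] :=
  ⟨(starRingEnd ℂ) q.re, (starRingEnd ℂ) q.imI, (starRingEnd ℂ) q.imJ, (starRingEnd ℂ) q.imK⟩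

/-- Dot product of complex quaternions. -/
noncomputable def qdot (q r : ℍ[ℂ]) : ℂ :=
  q.re * r.re + q.imI * r.imI + q.imJ * r.imJ + q.imK * r.imK

/-- For orthogonal real unit pure quaternions `e_m, e_n`, real `φ`, and
`u = 1 + (e_m + i e_n) φ/2 (= exp[(e_m + i e_n) φ/2])`, the null minquat
`x = e0 + i e_m e_n` satisfies `u x (ū)* = x`: it is an eigenminquat of the
singular proper Lorentz rotation with eigenvalue `1`. -/
theorem singular_rotation_eigenminquat (em en : ℍ[ℂ])
    (hmreal : cconj em = em) (hnreal : cconj en = en)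
    (hm0 : em.re = 0) (hn0 : en.re = 0)
    (hm1 : em * em = -1) (hn1 : en * en = -1)
    (horth : qdot em en = 0) (φ : ℝ)
    (u : ℍ[ℂ]) (hu : u = 1 + ((φ / 2 : ℝ) : ℂ) • (em + Complex.I • en)) :
    u * (1 + Complex.I • (em * en)) * star (cconj u) =
      1 + Complex.I • (em * en) := by
  set c : ℂ := ((φ / 2 : ℝ) : ℂ) with hc
  have hsm : ∀ (r : ℂ) (a : ℍ[ℂ]), r • a = (r : ℍ[ℂ]) * a := fun r a =>
    (QuaternionAlgebra.coe_mul_eq_smul r a).symm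
  set Ic : ℍ[ℂ] := ((Complex.I : ℂ) : ℍ[ℂ]) with hIc
  set Cc : ℍ[ℂ] := ((c : ℂ) : ℍ[ℂ]) with hCc
  have commI : ∀ a : ℍ[ℂ], a * Ic = Ic * a := fun a =>
    (QuaternionAlgebra.coe_commutes _ _).symm
  have commc : ∀ a : ℍ[ℂ], a * Cc = Cc * a := fun a =>
    (QuaternionAlgebra.coe_commutes _ _).symm
  have hII : Ic * Ic = -1 := by
    have k1 : Ic * Ic = ((Complex.I * Complex.I : ℂ) : ℍ[ℂ]) :=
      (QuaternionAlgebra.coe_mul _ _).symm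
    have k2 : ((Complex.I * Complex.I : ℂ) : ℍ[ℂ]) = ((-1 : ℂ) : ℍ[ℂ]) := by
      rw [Complex.I_mul_I]
    have k3 : ((-1 : ℂ) : ℍ[ℂ]) = -((1 : ℂ) : ℍ[ℂ]) := QuaternionAlgebra.coe_neg 1
    have k4 : ((1 : ℂ) : ℍ[ℂ]) = 1 := QuaternionAlgebra.coe_one
    rw [k1, k2, k3, k4]
  -- anticommutation of orthogonal pure quaternions
  unfold qdot at horth
  rw [hm0, hn0] at horth
  have hanti : en * em = -(em * en) := by
    ext <;>
      simp only [Quaternion.re_mul, Quaternion.imI_mul, Quaternion.imJ_mul,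
        Quaternion.imK_mul, Quaternion.re_neg, Quaternion.imI_neg,
        Quaternion.imJ_neg, Quaternion.imK_neg, hm0, hn0] <;>
      first
        | linear_combination (-2 : ℂ) * horth
        | ring
  -- quaternion product facts
  have h1 : em * (em * en) = -en := by
    rw [← mul_assoc, hm1]; exact neg_one_mul en
  have h2 : en * (em * en) = em := by
    rw [← mul_assoc, hanti]
    have k1 : -(em * en) * en = -(em * (en * en)) := by
      have := neg_mul (em * en) en
      rw [this, mul_assoc]
    rw [k1, hn1]
    have k2 : em * (-1 : ℍ[ℂ]) = -em := mul_neg_one em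
    rw [k2]; exact neg_neg em
  have h3 : (em * en) * em = en := by
    rw [mul_assoc, hanti]
    have k1 : em * -(em * en) = -(em * (em * en)) := mul_neg em (em * en)
    rw [k1, ← mul_assoc, hm1]
    have k2 : (-1 : ℍ[ℂ]) * en = -en := neg_one_mul en
    rw [k2]; exact neg_neg en
  have h4 : (em * en) * en = -em := by
    rw [mul_assoc, hn1]; exact mul_neg_one em
  -- key zero products
  have hz1 : (em + Ic * en) * (1 + Ic * (em * en)) = 0 := by
    have e1 : em * (Ic * (em * en)) = Ic * (em * (em * en)) := by
      rw [← mul_assoc, commI em, mul_assoc]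
    have e2 : (Ic * en) * (Ic * (em * en)) = (Ic * Ic) * (en * (em * en)) := by
      rw [mul_assoc, ← mul_assoc en, commI en, mul_assoc, ← mul_assoc]
    rw [add_mul, mul_add, mul_add, mul_one, mul_one, e1, e2, h1, h2, hII]
    have k1 : Ic * -en = -(Ic * en) := mul_neg Ic en
    have k2 : (-1 : ℍ[ℂ]) * em = -em := neg_one_mul em
    rw [k1, k2]; abel
  have hz2 : (1 + Ic * (em * en)) * (em - Ic * en) = 0 := by
    have e1 : (Ic * (em * en)) * em = Ic * ((em * en) * em) := mul_assoc _ _ _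
    have e2 : (Ic * (em * en)) * (Ic * en) = (Ic * Ic) * ((em * en) * en) := by
      rw [mul_assoc, ← mul_assoc (em * en), commI (em * en), mul_assoc, ← mul_assoc]
    rw [add_mul, one_mul, mul_sub, e1, e2, h3, h4, hII]
    have k1 : (-1 : ℍ[ℂ]) * -em = em := by
      have := neg_one_mul (-em)
      rw [this]; exact neg_neg em
    rw [k1]; abel
  -- star of cconj u
  obtain ⟨hm1', hm2', hm3', hm4'⟩ := Quaternion.ext_iff.mp hmreal
  obtain ⟨hn1', hn2', hn3', hn4'⟩ := Quaternion.ext_iff.mp hnreal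
  simp only [cconj] at hm1' hm2' hm3' hm4' hn1' hn2' hn3' hn4'
  have hcc : (starRingEnd ℂ) c = c := by rw [hc]; exact Complex.conj_ofReal _
  have hs : star (cconj u) = 1 - Cc * (em - Ic * en) := by
    rw [hu, hIc, hCc]
    ext <;>
      simp only [Quaternion.re_star, Quaternion.imI_star, Quaternion.imJ_star,
        Quaternion.imK_star] <;>
      simp [cconj, hm1', hm2', hm3', hm4', hn1', hn2', hn3', hn4', hcc,
        Complex.conj_I, hm0, hn0, Quaternion.re_star, Quaternion.imI_star,
        Quaternion.imJ_star, Quaternion.imK_star] <;>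
      ring
  have hu' : u = 1 + Cc * (em + Ic * en) := by rw [hu, hsm, hsm]
  rw [hsm Complex.I (em * en), hs, hu']
  rw [add_mul, one_mul, mul_assoc Cc, hz1, mul_zero, add_zero]
  have k : (1 + Ic * (em * en)) * (Cc * (em - Ic * en)) =
      Cc * ((1 + Ic * (em * en)) * (em - Ic * en)) := by
    rw [← mul_assoc, commc (1 + Ic * (em * en)), mul_assoc]
  rw [mul_sub, mul_one, k, hz2, mul_zero, sub_zero]
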